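/- arXiv:1003.3772 — 5 statements merged into one kernel-verified Lean document; each statement's English description precedes it below -/
import Mathlib

section
/- Let G be a finite group, H ≤ G a subgroup, and g ∈ G. Then β^G_H([g]) lies in the ideal T_H of Z_p[H^{ab}], where T_H is the image of the trace map x ↦ Σ_{w ∈ W_G H} w·x·w⁻¹ on Z_p[H^{ab}] for the conjugation action of the Weyl group W_G H = N_G H / H. -/
/- STATEMENT 2: for `H ≤ G` and `g ∈ G`, `β^G_H([g])` lies in the ideal `T_H`,
the image of the trace map `x ↦ Σ_{w ∈ W_G H} w·x·w⁻¹` on `ℤ_p[H^{ab}]`, where the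
Weyl group `W_G H = N_G H / H` acts by conjugation (computed via a set of coset
representatives of `H` in `N_G H`). -/

open scoped Classical

/-- Conjugation by a normalizer element, as an automorphism-type hom `H →* H`. -/
def conjHom {G : Type*} [Group G] (H : Subgroup G) (n : G) (hn : n ∈ Subgroup.normalizer (H : Set G)) :
    ↥H →* ↥H where
  toFun h := ⟨n * h.1 * n⁻¹, (Subgroup.mem_normalizer_iff.mp hn h.1).mp h.2⟩
  map_one' := by ext; simp
  map_mul' a b := by ext; simp

/-- The trace map `x ↦ Σ_{w ∈ W_G H} w x w⁻¹` on `ℤ_p[H^{ab}]`, computed using a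
set `TN` of coset representatives of `H` in `N_G H`. -/
noncomputable def traceMap {p : ℕ} [Fact p.Prime] {G : Type*} [Group G] (H : Subgroup G)
    (TN : Finset G) (x : MonoidAlgebra ℤ_[p] (Abelianization ↥H)) :
    MonoidAlgebra ℤ_[p] (Abelianization ↥H) :=
  ∑ n ∈ TN, if hn : n ∈ Subgroup.normalizer (H : Set G) then
    MonoidAlgebra.mapDomain (Abelianization.map (conjHom H n hn)) x else 0

/-- `β^G_H([g])` computed with the transversal `T`. -/
noncomputable def bmap {p : ℕ} [Fact p.Prime] {G : Type*} [Group G]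
    (H : Subgroup G) (T : Finset G) (g : G) : MonoidAlgebra ℤ_[p] (Abelianization ↥H) :=
  ∑ x ∈ T, if h : x⁻¹ * g * x ∈ H then
    MonoidAlgebra.single (Abelianization.of (⟨x⁻¹ * g * x, h⟩ : ↥H)) (1 : ℤ_[p]) else 0

/-- `T` is a set of left coset representatives for `H` in `G`. -/
def IsTransversal {G : Type*} [Group G] (H : Subgroup G) (T : Finset G) : Prop :=
  ∀ g : G, ∃! x, x ∈ T ∧ x⁻¹ * g ∈ H

/-- Conjugation by an element of `H` does not change the image in the abelianization. -/
lemma abConj {G : Type*} [Group G] (H : Subgroup G) (a b h : G) (ha : a ∈ H) (hb : b ∈ H)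
    (hh : h ∈ H) (hco : b = h⁻¹ * a * h) :
    Abelianization.of (⟨a, ha⟩ : ↥H) = Abelianization.of (⟨b, hb⟩ : ↥H) := by
  have h1 : (⟨b, hb⟩ : ↥H) = (⟨h, hh⟩ : ↥H)⁻¹ * ⟨a, ha⟩ * ⟨h, hh⟩ := by
    ext; simp [hco]
  rw [h1, map_mul, map_mul, map_inv, mul_comm, mul_inv_cancel_left]

lemma mapDomain_finset_sum' {α M N R : Type*} [Semiring R] (f : M → N) (s : Finset α)
    (g : α → MonoidAlgebra R M) :
    MonoidAlgebra.mapDomain f (∑ i ∈ s, g i) = ∑ i ∈ s, MonoidAlgebra.mapDomain f (g i) := by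
  induction s using Finset.induction_on with
  | empty => simp
  | insert a s ha ih => rw [Finset.sum_insert ha, Finset.sum_insert ha, MonoidAlgebra.mapDomain_add, ih]

theorem stmt2 (p : ℕ) [Fact p.Prime] (G : Type*) [Group G] [Fintype G]
    (H : Subgroup G) (g : G)
    (T : Finset G) (hT : IsTransversal H T)
    (TN : Finset G) (hTNsub : ∀ n ∈ TN, n ∈ Subgroup.normalizer (H : Set G))
    (hTN : ∀ n ∈ Subgroup.normalizer (H : Set G), ∃! x, x ∈ TN ∧ x⁻¹ * n ∈ H) :
    bmap (p := p) H T g ∈ Set.range (traceMap (p := p) H TN) := by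
  classical
  -- conjugation membership helper
  have conjmem : ∀ n, n ∈ Subgroup.normalizer (H : Set G) → ∀ h, h ∈ H → n * h * n⁻¹ ∈ H :=
    fun n hn h hh => (Subgroup.mem_normalizer_iff.mp hn h).mp hh
  -- transversal choice function for T
  set tr : G → G := fun g' => (hT g').choose with htrdef
  have tr_memT : ∀ g' : G, tr g' ∈ T := fun g' => (hT g').choose_spec.1.1
  have tr_mem : ∀ g' : G, (tr g')⁻¹ * g' ∈ H := fun g' => (hT g').choose_spec.1.2
  have tr_uniq : ∀ g' x, x ∈ T → x⁻¹ * g' ∈ H → x = tr g' :=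
    fun g' x h1 h2 => (hT g').choose_spec.2 x ⟨h1, h2⟩
  -- transversal choice function for TN
  set nr : G → G := fun m => if h : m ∈ Subgroup.normalizer (H : Set G) then (hTN m h).choose else 1 with hnrdef
  have nr_memTN : ∀ m, m ∈ Subgroup.normalizer (H : Set G) → nr m ∈ TN := by
    intro m hm; simp only [hnrdef, dif_pos hm]; exact (hTN m hm).choose_spec.1.1
  have nr_mem : ∀ m, m ∈ Subgroup.normalizer (H : Set G) → (nr m)⁻¹ * m ∈ H := by
    intro m hm; simp only [hnrdef, dif_pos hm]; exact (hTN m hm).choose_spec.1.2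
  have nr_uniq : ∀ m, m ∈ Subgroup.normalizer (H : Set G) → ∀ x, x ∈ TN → x⁻¹ * m ∈ H → x = nr m := by
    intro m hm x h1 h2; simp only [hnrdef, dif_pos hm]; exact (hTN m hm).choose_spec.2 x ⟨h1, h2⟩
  -- the set of relevant coset representatives
  set S : Finset G := T.filter (fun x => x⁻¹ * g * x ∈ H) with hSdef
  -- orbit classes under the Weyl group action and a choice of representatives
  set cs : G → Finset G := fun x => S.filter (fun y => x⁻¹ * y ∈ Subgroup.normalizer (H : Set G)) with hcsdef
  have cs_eq : ∀ x y : G, x⁻¹ * y ∈ Subgroup.normalizer (H : Set G) → cs x = cs y := by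
    intro x y hxy
    ext z
    simp only [hcsdef, Finset.mem_filter, and_congr_right_iff]
    intro _
    constructor
    · intro hz
      have h1 : y⁻¹ * z = (x⁻¹ * y)⁻¹ * (x⁻¹ * z) := by group
      rw [h1]; exact mul_mem (inv_mem hxy) hz
    · intro hz
      have h1 : x⁻¹ * z = (x⁻¹ * y) * (y⁻¹ * z) := by group
      rw [h1]; exact mul_mem hxy hz
  set rep : G → G := fun x => if h : (cs x).Nonempty then h.choose else 1 with hrepdef
  have rep_mem : ∀ x ∈ S, rep x ∈ cs x := by
    intro x hx
    have hxcs : x ∈ cs x := by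
      simp only [hcsdef, Finset.mem_filter]
      exact ⟨hx, by rw [inv_mul_cancel]; exact one_mem _⟩
    have hne : (cs x).Nonempty := ⟨x, hxcs⟩
    simp only [hrepdef, dif_pos hne]
    exact hne.choose_spec
  have rep_eq : ∀ x y : G, x⁻¹ * y ∈ Subgroup.normalizer (H : Set G) → rep x = rep y := by
    intro x y hxy
    simp only [hrepdef, cs_eq x y hxy]
  have rep_S : ∀ x ∈ S, rep x ∈ S := by
    intro x hx
    have := rep_mem x hx
    simp only [hcsdef, Finset.mem_filter] at this
    exact this.1
  have rep_rel : ∀ x ∈ S, x⁻¹ * rep x ∈ Subgroup.normalizer (H : Set G) := by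
    intro x hx
    have := rep_mem x hx
    simp only [hcsdef, Finset.mem_filter] at this
    exact this.2
  have rep_idem : ∀ x ∈ S, rep (rep x) = rep x := by
    intro x hx
    exact (rep_eq x (rep x) (rep_rel x hx)).symm
  set R : Finset G := S.image rep with hRdef
  have hR_S : ∀ x ∈ R, x ∈ S := by
    intro x hx
    rw [hRdef, Finset.mem_image] at hx
    obtain ⟨x0, hx0, rfl⟩ := hx
    exact rep_S x0 hx0
  have hR_fix : ∀ x ∈ R, rep x = x := by
    intro x hx
    rw [hRdef, Finset.mem_image] at hx
    obtain ⟨x0, hx0, rfl⟩ := hx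
    exact rep_idem x0 hx0
  have hS_T : ∀ x ∈ S, x ∈ T := fun x hx => (Finset.mem_filter.mp hx).1
  have hS_H : ∀ x ∈ S, x⁻¹ * g * x ∈ H := fun x hx => (Finset.mem_filter.mp hx).2
  -- key computation: the target of a pair (n, x)
  have key1 : ∀ n, n ∈ Subgroup.normalizer (H : Set G) → ∀ x, x⁻¹ * g * x ∈ H →
      (tr (x * n⁻¹))⁻¹ * g * (tr (x * n⁻¹)) ∈ H := by
    intro n hn x hx
    have h0 : (tr (x * n⁻¹))⁻¹ * (x * n⁻¹) ∈ H := tr_mem (x * n⁻¹)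
    have hconj : n * (x⁻¹ * g * x) * n⁻¹ ∈ H := conjmem n hn _ hx
    have heq : (tr (x * n⁻¹))⁻¹ * g * (tr (x * n⁻¹)) =
        ((tr (x * n⁻¹))⁻¹ * (x * n⁻¹)) * (n * (x⁻¹ * g * x) * n⁻¹) *
          ((tr (x * n⁻¹))⁻¹ * (x * n⁻¹))⁻¹ := by group
    rw [heq]
    exact mul_mem (mul_mem h0 hconj) (inv_mem h0)
  refine ⟨bmap (p := p) H R g, ?_⟩
  have step1 : traceMap (p := p) H TN (bmap (p := p) H R g) =
      ∑ n ∈ TN, ∑ x ∈ R,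
        (if hn : n ∈ Subgroup.normalizer (H : Set G) then
          (if hx : x⁻¹ * g * x ∈ H then
            MonoidAlgebra.single (Abelianization.of
              (⟨n * (x⁻¹ * g * x) * n⁻¹, conjmem n hn _ hx⟩ : ↥H)) (1 : ℤ_[p])
          else 0)
        else 0) := by
    unfold traceMap bmap
    refine Finset.sum_congr rfl ?_
    intro n hn
    rw [dif_pos (hTNsub n hn), mapDomain_finset_sum']
    refine Finset.sum_congr rfl ?_
    intro x hx
    rw [dif_pos (hTNsub n hn)]
    by_cases hxH : x⁻¹ * g * x ∈ H
    · rw [dif_pos hxH, dif_pos hxH, MonoidAlgebra.mapDomain_single, Abelianization.map_of]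
      rfl
    · rw [dif_neg hxH, dif_neg hxH, MonoidAlgebra.mapDomain_zero]
  have step3 : bmap (p := p) H T g =
      ∑ x ∈ S, (if h : x⁻¹ * g * x ∈ H then
        MonoidAlgebra.single (Abelianization.of (⟨x⁻¹ * g * x, h⟩ : ↥H)) (1 : ℤ_[p]) else 0) := by
    unfold bmap
    refine (Finset.sum_subset (Finset.filter_subset _ T) ?_).symm
    intro x hxT hxS
    rw [dif_neg]
    intro hc
    exact hxS (Finset.mem_filter.mpr ⟨hxT, hc⟩)
  rw [step1, step3, ← Finset.sum_product']
  refine Finset.sum_bij' (fun q _ => tr (q.2 * q.1⁻¹)) (fun s _ => (nr (s⁻¹ * rep s), rep s))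
    ?_ ?_ ?_ ?_ ?_
  · -- maps into S
    rintro ⟨n, x⟩ hq
    rw [Finset.mem_product] at hq
    have hn : n ∈ Subgroup.normalizer (H : Set G) := hTNsub n hq.1
    have hxS := hR_S x hq.2
    exact Finset.mem_filter.mpr ⟨tr_memT _, key1 n hn x (hS_H x hxS)⟩
  · -- maps into TN ×ˢ R
    intro s hs
    rw [Finset.mem_product]
    constructor
    · exact nr_memTN _ (rep_rel s hs)
    · rw [hRdef, Finset.mem_image]; exact ⟨s, hs, rfl⟩
  · -- left inverse
    rintro ⟨n, x⟩ hq
    rw [Finset.mem_product] at hq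
    have hn : n ∈ Subgroup.normalizer (H : Set G) := hTNsub n hq.1
    have hxS := hR_S x hq.2
    set t := tr (x * n⁻¹) with htdef
    have h0 : t⁻¹ * (x * n⁻¹) ∈ H := tr_mem (x * n⁻¹)
    have htx : t⁻¹ * x = (t⁻¹ * (x * n⁻¹)) * n := by group
    have htxN : t⁻¹ * x ∈ Subgroup.normalizer (H : Set G) := by
      rw [htx]; exact mul_mem (Subgroup.le_normalizer h0) hn
    have hrept : rep t = x := by
      rw [rep_eq t x htxN]
      exact hR_fix x hq.2
    have hnr : nr (t⁻¹ * x) = n := by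
      refine (nr_uniq (t⁻¹ * x) htxN n hq.1 ?_).symm
      have : n⁻¹ * (t⁻¹ * x) = n⁻¹ * (t⁻¹ * (x * n⁻¹)) * (n⁻¹)⁻¹ := by group
      rw [this]
      exact conjmem n⁻¹ (inv_mem hn) _ h0
    simp only [hrept, hnr]
  · -- right inverse
    intro s hs
    have hm : s⁻¹ * rep s ∈ Subgroup.normalizer (H : Set G) := rep_rel s hs
    set n := nr (s⁻¹ * rep s) with hndef
    have hnN : n ∈ Subgroup.normalizer (H : Set G) := hTNsub n (nr_memTN _ hm)
    have hk : n⁻¹ * (s⁻¹ * rep s) ∈ H := nr_mem _ hm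
    have hsmem : s⁻¹ * (rep s * n⁻¹) ∈ H := by
      have : s⁻¹ * (rep s * n⁻¹) = n * (n⁻¹ * (s⁻¹ * rep s)) * n⁻¹ := by group
      rw [this]
      exact conjmem n hnN _ hk
    exact (tr_uniq (rep s * n⁻¹) s (hS_T s hs) hsmem).symm
  · -- terms agree
    rintro ⟨n, x⟩ hq
    rw [Finset.mem_product] at hq
    have hn : n ∈ Subgroup.normalizer (H : Set G) := hTNsub n hq.1
    have hxS := hR_S x hq.2
    have hxH := hS_H x hxS
    rw [dif_pos hn, dif_pos hxH, dif_pos (key1 n hn x hxH)]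
    congr 1
    set t := tr (x * n⁻¹) with htdef
    have h0 : t⁻¹ * (x * n⁻¹) ∈ H := tr_mem (x * n⁻¹)
    refine (abConj H (t⁻¹ * g * t) (n * (x⁻¹ * g * x) * n⁻¹) (t⁻¹ * (x * n⁻¹))
      (key1 n hn x hxH) (conjmem n hn _ hxH) h0 ?_).symm
    group
end

section
/- Let G be a finite group and define τ^G_C : Π_{H ∈ C} Z_p[H] → Q_p[Conj(G)] by τ^G_C((a_H)) = Σ_{H∈C} τ^G_{C,H}(a_H), where for a generator h of the cyclic group H, τ^G_{C,H}(h) = (1/([G:N_G H]·|W_G H|))·[h], and τ^G_{C,H}(h) = 0 if h does not generate H. Then τ^G_C ∘ β^G_C is the identity map on Z_p[Conj(G)]; in particular β^G_C is injective. -/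
/- STATEMENT 4: `τ^G_C ∘ β^G_C` is the identity on `ℤ_p[Conj(G)]`; in particular
`β^G_C` is injective.  Here `C` is the set of cyclic subgroups of `G`,
`β^G_{C,H}([g]) = Σ_{x ∈ C(G,H), x⁻¹gx ∈ H} x⁻¹gx ∈ ℤ_p[H]`, and
`τ^G_{C,H}(h) = [h]/([G:N_G H]·|W_G H|)` for `h` a generator of `H`, `0` otherwise. -/

open scoped Classical

/-- `β^G_{C,H}([g]) ∈ ℤ_p[H]`, computed with the transversal `T`. -/
noncomputable def bmapCyc {p : ℕ} [Fact p.Prime] {G : Type*} [Group G]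
    (H : Subgroup G) (T : Finset G) (g : G) : MonoidAlgebra ℤ_[p] ↥H :=
  ∑ x ∈ T, if h : x⁻¹ * g * x ∈ H then
    MonoidAlgebra.single (⟨x⁻¹ * g * x, h⟩ : ↥H) (1 : ℤ_[p]) else 0

/-- `τ^G_C` applied to a tuple `(a_H)_{H ≤ G}` (only cyclic `H` contribute):
`Σ_{H cyclic} Σ_h a_H(h)·[h]/([G:N_G H]·|W_G H|)`, the inner sum over generators `h`. -/
noncomputable def tauFull {p : ℕ} [Fact p.Prime] {G : Type*} [Group G] [Fintype G]
    (a : ∀ H : Subgroup G, MonoidAlgebra ℤ_[p] ↥H) : ConjClasses G →₀ ℚ_[p] :=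
  ∑ H ∈ Finset.univ.filter (fun H : Subgroup G => IsCyclic ↥H),
    (a H).coeff.sum fun h c =>
      if Subgroup.zpowers (h : G) = H then
        (((c : ℚ_[p]) / (((Subgroup.normalizer (H : Set G)).index : ℚ_[p]) * (H.relIndex (Subgroup.normalizer (H : Set G)) : ℚ_[p]))))
          • Finsupp.single (ConjClasses.mk (h : G)) (1 : ℚ_[p])
      else 0

/-- The linear extension of `β^G_C` to all of `ℤ_p[Conj(G)]` (computed on a fixed
representative of each conjugacy class). -/
noncomputable def betaFull {p : ℕ} [Fact p.Prime] {G : Type*} [Group G]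
    (Tr : Subgroup G → Finset G) (v : ConjClasses G →₀ ℤ_[p]) :
    ∀ H : Subgroup G, MonoidAlgebra ℤ_[p] ↥H :=
  fun H => v.sum fun c z => z • bmapCyc H (Tr H) c.out


set_option linter.unusedSectionVars false
set_option maxHeartbeats 1000000

section Helpers
variable {p : ℕ} [Fact p.Prime] {G : Type*} [Group G] [Fintype G]

lemma conj_mem_zpow (a k : G) (hk : k ∈ Subgroup.zpowers a) : k⁻¹ * a * k = a := by
  obtain ⟨m, rfl⟩ := Subgroup.mem_zpowers_iff.mp hk
  group

lemma conj_mem_zpow' (a k : G) (hk : k ∈ Subgroup.zpowers a) : k * a * k⁻¹ = a := by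
  have := conj_mem_zpow a k⁻¹ ((Subgroup.zpowers a).inv_mem hk)
  simpa using this

lemma orderOf_conj' (a b : G) : orderOf (b⁻¹ * a * b) = orderOf a := by
  have h : SemiconjBy b⁻¹ a (b⁻¹ * a * b) := by unfold SemiconjBy; group
  exact (SemiconjBy.orderOf_eq b⁻¹ h).symm

lemma mk_conj (a b : G) : ConjClasses.mk (b⁻¹ * a * b) = ConjClasses.mk a := by
  rw [ConjClasses.mk_eq_mk_iff_isConj]; exact (isConj_iff.2 ⟨b⁻¹, by group⟩).symm

lemma mk_out' (q : ConjClasses G) : ConjClasses.mk q.out = q := q.out_eq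

lemma index_eq_of_ncard_eq (H K : Subgroup G) (h : Nat.card ↥H = Nat.card ↥K) :
    H.index = K.index := by
  have h1 := Subgroup.index_mul_card H
  have h2 := Subgroup.index_mul_card K
  have hpos : 0 < Nat.card ↥K := Nat.card_pos
  apply Nat.eq_of_mul_eq_mul_right hpos
  rw [h2, ← h1, h]

lemma denom_eq (H : Subgroup G) :
    (((Subgroup.normalizer (H : Set G)).index : ℚ_[p]) * (H.relIndex (Subgroup.normalizer (H : Set G)) : ℚ_[p])) = (H.index : ℚ_[p]) := by
  rw [mul_comm, ← Nat.cast_mul, Subgroup.relIndex_mul_index Subgroup.le_normalizer]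

/-- The summand function of `tauFull`. -/
noncomputable def tauf (p : ℕ) [Fact p.Prime] {G : Type*} [Group G] [Fintype G]
    (H : Subgroup G) (h : ↥H) (c : ℤ_[p]) : ConjClasses G →₀ ℚ_[p] :=
  if Subgroup.zpowers (h : G) = H then
    (((c : ℚ_[p]) / (((Subgroup.normalizer (H : Set G)).index : ℚ_[p]) * (H.relIndex (Subgroup.normalizer (H : Set G)) : ℚ_[p]))))
      • Finsupp.single (ConjClasses.mk (h : G)) (1 : ℚ_[p])
  else 0

lemma tauf_zero (H : Subgroup G) (h : ↥H) : tauf p H h 0 = 0 := by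
  simp [tauf]

lemma tauf_add (H : Subgroup G) (h : ↥H) (b₁ b₂ : ℤ_[p]) :
    tauf p H h (b₁ + b₂) = tauf p H h b₁ + tauf p H h b₂ := by
  simp only [tauf]; split_ifs with hc
  · push_cast; rw [add_div, add_smul]
  · simp

lemma tauf_smul (H : Subgroup G) (h : ↥H) (z c : ℤ_[p]) :
    tauf p H h (z * c) = (z : ℚ_[p]) • tauf p H h c := by
  simp only [tauf]; split_ifs with hc
  · rw [smul_smul]; congr 1; push_cast; ring
  · simp

lemma isCyclic_zpowers (a : G) : IsCyclic ↥(Subgroup.zpowers a) := by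
  refine ⟨⟨⟨a, Subgroup.mem_zpowers a⟩, fun x => ?_⟩⟩
  obtain ⟨m, hm⟩ := Subgroup.mem_zpowers_iff.mp x.2
  refine Subgroup.mem_zpowers_iff.mpr ⟨m, Subtype.ext ?_⟩
  rw [SubgroupClass.coe_zpow]
  exact hm

lemma tauFull_eq (a : ∀ H : Subgroup G, MonoidAlgebra ℤ_[p] ↥H) :
    tauFull a = ∑ H ∈ Finset.univ.filter (fun H : Subgroup G => IsCyclic ↥H),
      (a H).coeff.sum (tauf p H) := rfl

/-- The key counting lemma. -/
lemma count_lemma (Tr : Subgroup G → Finset G)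
    (hTr : ∀ H : Subgroup G, ∀ g : G, ∃! x, x ∈ Tr H ∧ x⁻¹ * g ∈ H) (g : G) :
    ∑ H : Subgroup G,
      ((Tr H).filter (fun x => Subgroup.zpowers (x⁻¹ * g * x) = H)).card
      = (Subgroup.zpowers g).index := by
  classical
  set r : Subgroup G → G → G := fun H y => (hTr H y).exists.choose with hrdef
  have hr1 : ∀ H y, r H y ∈ Tr H := fun H y => (hTr H y).exists.choose_spec.1
  have hr2 : ∀ H y, (r H y)⁻¹ * y ∈ H := fun H y => (hTr H y).exists.choose_spec.2
  have hru : ∀ H y x, x ∈ Tr H → x⁻¹ * y ∈ H → r H y = x := by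
    intro H y x h1 h2
    exact (hTr H y).unique ⟨hr1 H y, hr2 H y⟩ ⟨h1, h2⟩
  set B : Finset ((_ : Subgroup G) × G) :=
    Finset.univ.sigma (fun H : Subgroup G =>
      (Tr H).filter fun x => Subgroup.zpowers (x⁻¹ * g * x) = H) with hB
  set φ : G → (_ : Subgroup G) × G :=
    fun y => ⟨Subgroup.zpowers (y⁻¹ * g * y), r (Subgroup.zpowers (y⁻¹ * g * y)) y⟩ with hφ
  have hmem : ∀ y ∈ (Finset.univ : Finset G), φ y ∈ B := by
    intro y _
    set H := Subgroup.zpowers (y⁻¹ * g * y) with hH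
    have hk : (r H y)⁻¹ * y ∈ H := hr2 H y
    refine Finset.mem_sigma.2 ⟨Finset.mem_univ _, Finset.mem_filter.2 ⟨hr1 H y, ?_⟩⟩
    have key : (r H y)⁻¹ * g * r H y = y⁻¹ * g * y := by
      calc (r H y)⁻¹ * g * r H y
          = ((r H y)⁻¹ * y) * (y⁻¹ * g * y) * ((r H y)⁻¹ * y)⁻¹ := by group
        _ = y⁻¹ * g * y := conj_mem_zpow' _ _ hk
    rw [key]
  have hfib : ∀ b ∈ B, (Finset.univ.filter fun y => φ y = b).card = orderOf g := by
    rintro ⟨H, x₀⟩ hb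
    obtain ⟨-, hx₀⟩ := Finset.mem_sigma.1 hb
    obtain ⟨hx₀T, hx₀c⟩ := Finset.mem_filter.1 hx₀
    dsimp only at hx₀T hx₀c
    have hset : (Finset.univ.filter fun y => φ y = ⟨H, x₀⟩)
        = Finset.univ.filter fun y => x₀⁻¹ * y ∈ H := by
      ext y
      simp only [Finset.mem_filter, Finset.mem_univ, true_and]
      constructor
      · intro h
        have h1 : Subgroup.zpowers (y⁻¹ * g * y) = H := congrArg Sigma.fst h
        have h2 : r (Subgroup.zpowers (y⁻¹ * g * y)) y = x₀ := congrArg Sigma.snd h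
        have := hr2 (Subgroup.zpowers (y⁻¹ * g * y)) y
        rw [h2, h1] at this
        exact this
      · intro hk
        have hco : y⁻¹ * g * y = x₀⁻¹ * g * x₀ := by
          calc y⁻¹ * g * y
              = (x₀⁻¹ * y)⁻¹ * (x₀⁻¹ * g * x₀) * (x₀⁻¹ * y) := by group
            _ = x₀⁻¹ * g * x₀ := conj_mem_zpow _ _ (by rw [hx₀c]; exact hk)
        have h1 : Subgroup.zpowers (y⁻¹ * g * y) = H := by rw [hco, hx₀c]
        have h2 : r (Subgroup.zpowers (y⁻¹ * g * y)) y = x₀ := by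
          rw [h1]; exact hru H y x₀ hx₀T hk
        exact Sigma.ext h1 (heq_of_eq h2)
    rw [hset]
    have e1 : (Finset.univ.filter fun y => x₀⁻¹ * y ∈ H).card
        = (Finset.univ.filter fun z => z ∈ H).card := by
      apply Finset.card_bij (fun y _ => x₀⁻¹ * y)
      · intro a ha
        simp only [Finset.mem_filter, Finset.mem_univ, true_and] at ha ⊢
        exact ha
      · intro a _ b _ hab
        exact mul_left_cancel hab
      · intro z hz
        refine ⟨x₀ * z, ?_, by group⟩
        simp only [Finset.mem_filter, Finset.mem_univ, true_and] at hz ⊢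
        simpa using hz
    have e2 : (Finset.univ.filter fun z => z ∈ H).card = Nat.card ↥H := by
      rw [Nat.card_eq_fintype_card, Fintype.card_subtype]
    rw [e1, e2, ← hx₀c, Nat.card_zpowers, orderOf_conj']
  have htot := Finset.card_eq_sum_card_fiberwise hmem
  rw [Finset.sum_congr rfl hfib, Finset.sum_const, Finset.card_univ] at htot
  have hBcard : B.card = ∑ H : Subgroup G,
      ((Tr H).filter (fun x => Subgroup.zpowers (x⁻¹ * g * x) = H)).card :=
    Finset.card_sigma _ _
  have hidx : (Subgroup.zpowers g).index * orderOf g = Fintype.card G := by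
    have := Subgroup.index_mul_card (Subgroup.zpowers g)
    rwa [Nat.card_zpowers, Nat.card_eq_fintype_card] at this
  rw [smul_eq_mul] at htot
  apply Nat.eq_of_mul_eq_mul_right (orderOf_pos g)
  rw [← hBcard, hidx]
  exact htot.symm

/-- Part 1: `τ ∘ β` sends `[g]` to `[g]`. -/
lemma tau_beta_single (Tr : Subgroup G → Finset G)
    (hTr : ∀ H : Subgroup G, ∀ g : G, ∃! x, x ∈ Tr H ∧ x⁻¹ * g ∈ H) (g : G) :
    tauFull (fun H => bmapCyc (p := p) H (Tr H) g)
      = Finsupp.single (ConjClasses.mk g) (1 : ℚ_[p]) := by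
  classical
  have hn0 : (((Subgroup.zpowers g).index : ℚ_[p])) ≠ 0 :=
    Nat.cast_ne_zero.2 Subgroup.index_ne_zero_of_finite
  rw [tauFull_eq]
  have step1 : ∀ H : Subgroup G,
      (bmapCyc (p := p) H (Tr H) g).coeff.sum (tauf p H)
        = ∑ x ∈ Tr H, if Subgroup.zpowers (x⁻¹ * g * x) = H
            then (((Subgroup.zpowers g).index : ℚ_[p]))⁻¹
              • Finsupp.single (ConjClasses.mk g) (1 : ℚ_[p])
            else 0 := by
    intro H
    unfold bmapCyc
    rw [MonoidAlgebra.coeff_sum, ← Finsupp.sum_finsetSum_index (h := tauf p H) (tauf_zero H) (tauf_add H)]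
    refine Finset.sum_congr rfl fun x _ => ?_
    by_cases hc : Subgroup.zpowers (x⁻¹ * g * x) = H
    · have hx : x⁻¹ * g * x ∈ H := hc ▸ Subgroup.mem_zpowers _
      rw [dif_pos hx, MonoidAlgebra.coeff_single, Finsupp.sum_single_index (tauf_zero H _), if_pos hc]
      have hidx : H.index = (Subgroup.zpowers g).index := by
        apply index_eq_of_ncard_eq
        rw [← hc, Nat.card_zpowers, Nat.card_zpowers, orderOf_conj']
      show tauf p H ⟨x⁻¹ * g * x, hx⟩ 1 = _
      rw [tauf]
      rw [if_pos hc]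
      rw [denom_eq, hidx, mk_conj]
      norm_num
    · rw [if_neg hc]
      by_cases hx : x⁻¹ * g * x ∈ H
      · rw [dif_pos hx, MonoidAlgebra.coeff_single, Finsupp.sum_single_index (tauf_zero H _)]
        show tauf p H ⟨x⁻¹ * g * x, hx⟩ 1 = 0
        rw [tauf, if_neg hc]
      · rw [dif_neg hx, MonoidAlgebra.coeff_zero, Finsupp.sum_zero_index]
  rw [Finset.sum_congr rfl fun H _ => step1 H]
  have step2 : ∀ H : Subgroup G,
      (∑ x ∈ Tr H, if Subgroup.zpowers (x⁻¹ * g * x) = H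
          then (((Subgroup.zpowers g).index : ℚ_[p]))⁻¹
            • Finsupp.single (ConjClasses.mk g) (1 : ℚ_[p])
          else 0)
        = ((Tr H).filter (fun x => Subgroup.zpowers (x⁻¹ * g * x) = H)).card
            • ((((Subgroup.zpowers g).index : ℚ_[p]))⁻¹
              • Finsupp.single (ConjClasses.mk g) (1 : ℚ_[p])) := by
    intro H
    rw [← Finset.sum_filter, Finset.sum_const]
  rw [Finset.sum_congr rfl fun H _ => step2 H, ← Finset.sum_smul]
  have hfil : (∑ H ∈ Finset.univ.filter (fun H : Subgroup G => IsCyclic ↥H),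
      ((Tr H).filter (fun x => Subgroup.zpowers (x⁻¹ * g * x) = H)).card)
      = ∑ H : Subgroup G,
        ((Tr H).filter (fun x => Subgroup.zpowers (x⁻¹ * g * x) = H)).card := by
    apply Finset.sum_filter_of_ne
    intro H _ hne
    obtain ⟨x, hx⟩ := Finset.card_pos.mp (Nat.pos_of_ne_zero hne)
    obtain ⟨-, hc⟩ := Finset.mem_filter.1 hx
    rw [← hc]
    exact isCyclic_zpowers _
  rw [hfil, count_lemma Tr hTr g, ← Nat.cast_smul_eq_nsmul ℚ_[p], smul_smul,
    mul_inv_cancel₀ hn0, one_smul]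

/-- `τ ∘ β` on a general element. -/
lemma tau_beta (Tr : Subgroup G → Finset G)
    (hTr : ∀ H : Subgroup G, ∀ g : G, ∃! x, x ∈ Tr H ∧ x⁻¹ * g ∈ H)
    (v : ConjClasses G →₀ ℤ_[p]) :
    tauFull (betaFull (p := p) Tr v)
      = v.sum fun c z => (z : ℚ_[p]) • Finsupp.single c (1 : ℚ_[p]) := by
  classical
  rw [tauFull_eq]
  have hswap : ∀ H : Subgroup G,
      (betaFull (p := p) Tr v H).coeff.sum (tauf p H)
        = ∑ c ∈ v.support, (v c : ℚ_[p]) • (bmapCyc (p := p) H (Tr H) c.out).coeff.sum (tauf p H) := by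
    intro H
    show (∑ c ∈ v.support, v c • bmapCyc (p := p) H (Tr H) c.out).coeff.sum (tauf p H) = _
    rw [MonoidAlgebra.coeff_sum, ← Finsupp.sum_finsetSum_index (h := tauf p H) (tauf_zero H) (tauf_add H)]
    refine Finset.sum_congr rfl fun c _ => ?_
    rw [MonoidAlgebra.coeff_smul, Finsupp.sum_smul_index (tauf_zero H)]
    rw [Finsupp.smul_sum]
    exact Finsupp.sum_congr fun i _ => tauf_smul H i (v c) _
  rw [Finset.sum_congr rfl fun H _ => hswap H, Finset.sum_comm]
  have : ∀ c ∈ v.support,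
      (∑ H ∈ Finset.univ.filter (fun H : Subgroup G => IsCyclic ↥H),
        (v c : ℚ_[p]) • (bmapCyc (p := p) H (Tr H) c.out).coeff.sum (tauf p H))
      = (v c : ℚ_[p]) • Finsupp.single c (1 : ℚ_[p]) := by
    intro c _
    rw [← Finset.smul_sum, ← tauFull_eq, tau_beta_single Tr hTr, mk_out']
  rw [Finset.sum_congr rfl this]
  rfl

lemma sum_single_apply (v : ConjClasses G →₀ ℤ_[p]) (a : ConjClasses G) :
    (v.sum fun c z => (z : ℚ_[p]) • Finsupp.single c (1 : ℚ_[p])) a = (v a : ℚ_[p]) := by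
  classical
  rw [Finsupp.sum_apply]
  simp only [Finsupp.smul_apply, Finsupp.single_apply, smul_eq_mul, mul_ite, mul_one, mul_zero]
  rw [Finsupp.sum_ite_eq' v a (fun _ z => (z : ℚ_[p]))]
  split_ifs with h
  · rfl
  · simp [Finsupp.notMem_support_iff.1 h]

end Helpers

theorem stmt4 (p : ℕ) [Fact p.Prime] (G : Type*) [Group G] [Fintype G]
    (Tr : Subgroup G → Finset G)
    (hTr : ∀ H : Subgroup G, ∀ g : G, ∃! x, x ∈ Tr H ∧ x⁻¹ * g ∈ H) :
    (∀ g : G,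
      tauFull (fun H => bmapCyc (p := p) H (Tr H) g)
        = Finsupp.single (ConjClasses.mk g) (1 : ℚ_[p])) ∧
    Function.Injective (betaFull (p := p) Tr) := by
  constructor
  · intro g
    exact tau_beta_single Tr hTr g
  · intro v w h
    have h2 : tauFull (betaFull (p := p) Tr v) = tauFull (betaFull (p := p) Tr w) := by rw [h]
    rw [tau_beta Tr hTr v, tau_beta Tr hTr w] at h2
    ext a
    have h3 := congrArg (fun f => f a) h2
    simp only [sum_single_apply] at h3
    exact Subtype.coe_injective h3
end

section
/- Let G be a finite group and H ≤ H₁ ≤ G with [H₁,H₁] ≤ H. Then for every g ∈ G, tr_{H,H₁}(β^G_{H₁}([g])) = π_{H,H₁}(β^G_H([g])), where tr_{H,H₁}: Z_p[H₁^{ab}] → Z_p[H/[H₁,H₁]] is the trace map (sending h̄ to [H₁:H]·h̄ if h ∈ H and to 0 otherwise) and π_{H,H₁}: Z_p[H^{ab}] → Z_p[H/[H₁,H₁]] is induced by the natural surjection H^{ab} → H/[H₁,H₁]. -/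
/- STATEMENT 7: for `H ≤ H₁ ≤ G` with `[H₁,H₁] ≤ H` and any `g ∈ G`,
`tr_{H,H₁}(β^G_{H₁}([g])) = π_{H,H₁}(β^G_H([g]))`, where `tr_{H,H₁}` is the trace map
`ℤ_p[H₁^{ab}] → ℤ_p[H/[H₁,H₁]]` (sending `h̄ ↦ [H₁:H]·h̄` for `h̄` in the subgroup,
`0` otherwise) and `π_{H,H₁}` is induced by the natural surjection
`H^{ab} → H/[H₁,H₁]`. -/

open scoped Classical

/-- `H/[H₁,H₁]`, realised as the image of `H` in `H₁^{ab}`. -/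
def Smap {G : Type*} [Group G] (H H₁ : Subgroup G) : Subgroup (Abelianization ↥H₁) :=
  Subgroup.map Abelianization.of (H.subgroupOf H₁)

/-- The trace map `tr_{H,H₁} : ℤ_p[H₁^{ab}] → ℤ_p[H/[H₁,H₁]]`. -/
noncomputable def trMap {p : ℕ} [Fact p.Prime] {G : Type*} [Group G] (H H₁ : Subgroup G)
    (x : MonoidAlgebra ℤ_[p] (Abelianization ↥H₁)) : MonoidAlgebra ℤ_[p] ↥(Smap H H₁) :=
  x.coeff.sum fun k c =>
    if hk : k ∈ Smap H H₁ then
      MonoidAlgebra.single (⟨k, hk⟩ : ↥(Smap H H₁)) ((H.relIndex H₁ : ℤ_[p]) * c)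
    else 0

/-- The natural map `H → H/[H₁,H₁]` (through the inclusion `H ≤ H₁`). -/
def toS {G : Type*} [Group G] (H H₁ : Subgroup G) (hle : H ≤ H₁) : ↥H →* ↥(Smap H H₁) :=
  MonoidHom.codRestrict (Abelianization.of.comp (Subgroup.inclusion hle)) _
    (fun h => ⟨Subgroup.inclusion hle h, by simp [Subgroup.mem_subgroupOf], rfl⟩)

/-- `π_{H,H₁} : ℤ_p[H^{ab}] → ℤ_p[H/[H₁,H₁]]`. -/
noncomputable def piMap {p : ℕ} [Fact p.Prime] {G : Type*} [Group G] (H H₁ : Subgroup G)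
    (hle : H ≤ H₁) (x : MonoidAlgebra ℤ_[p] (Abelianization ↥H)) :
    MonoidAlgebra ℤ_[p] ↥(Smap H H₁) :=
  MonoidAlgebra.mapDomain (Abelianization.lift (toS H H₁ hle)) x

section Aux
variable {G : Type*} [Group G]

lemma coe_mem_commutator (H₁ : Subgroup G) (c : ↥H₁) (hc : c ∈ commutator ↥H₁) :
    (c : G) ∈ ⁅H₁, H₁⁆ := by
  have h : (commutator ↥H₁).map H₁.subtype = ⁅H₁, H₁⁆ := by
    rw [commutator_def, Subgroup.map_commutator, ← MonoidHom.range_eq_map,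
      Subgroup.range_subtype]
  rw [← h]
  exact ⟨c, hc, rfl⟩

lemma of_eq_iff (H₁ : Subgroup G) (a b : ↥H₁) :
    Abelianization.of a = Abelianization.of b ↔ a⁻¹ * b ∈ commutator ↥H₁ :=
  QuotientGroup.eq

lemma fiber_card [Fintype G] (H H₁ : Subgroup G) (hle : H ≤ H₁)
    (T : Finset G) (hT : ∀ g : G, ∃! x, x ∈ T ∧ x⁻¹ * g ∈ H) (x₁ : G) :
    (T.filter fun x => x₁⁻¹ * x ∈ H₁).card = H.relIndex H₁ := by
  classical
  have : Fintype (↥H₁ ⧸ H.subgroupOf H₁) := Fintype.ofFinite _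
  rw [Subgroup.relIndex, Subgroup.index_eq_card, Nat.card_eq_fintype_card,
    ← Finset.card_univ]
  refine Finset.card_bij
    (fun x hx => QuotientGroup.mk (⟨x₁⁻¹ * x, (Finset.mem_filter.mp hx).2⟩ : ↥H₁))
    (fun _ _ => Finset.mem_univ _) ?_ ?_
  · intro a ha b hb hab
    rw [QuotientGroup.eq, Subgroup.mem_subgroupOf] at hab
    have h2 : a⁻¹ * b ∈ H := by
      simpa [mul_assoc, mul_inv_rev] using hab
    exact (hT b).unique ⟨(Finset.mem_filter.mp ha).1, h2⟩
      ⟨(Finset.mem_filter.mp hb).1, by simpa using one_mem H⟩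
  · intro q _
    obtain ⟨t, rfl⟩ := QuotientGroup.mk_surjective q
    obtain ⟨x, ⟨hxT, hxH⟩, -⟩ := hT (x₁ * (t : G))
    have hmem : x₁⁻¹ * x ∈ H₁ := by
      have h3 : x₁⁻¹ * x = (t : G) * (x⁻¹ * (x₁ * (t : G)))⁻¹ := by group
      rw [h3]
      exact mul_mem t.2 (hle (inv_mem hxH))
    refine ⟨x, Finset.mem_filter.mpr ⟨hxT, hmem⟩, ?_⟩
    rw [QuotientGroup.eq, Subgroup.mem_subgroupOf]
    show ((⟨x₁⁻¹ * x, hmem⟩ : ↥H₁)⁻¹ * t : G) ∈ H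
    simpa [mul_assoc, mul_inv_rev] using hxH

lemma of_conj_eq (H₁ : Subgroup G) (t a : ↥H₁) :
    Abelianization.of (t⁻¹ * a * t) = Abelianization.of a := by
  rw [map_mul, map_mul, map_inv, mul_comm ((Abelianization.of t)⁻¹) _, mul_assoc,
    inv_mul_cancel, mul_one]

end Aux

theorem stmt7 (p : ℕ) [Fact p.Prime] (G : Type*) [Group G] [Fintype G]
    (H H₁ : Subgroup G) (hle : H ≤ H₁) (hcomm : ⁅H₁, H₁⁆ ≤ H)
    (T : Finset G) (hT : ∀ g : G, ∃! x, x ∈ T ∧ x⁻¹ * g ∈ H)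
    (T₁ : Finset G) (hT₁ : ∀ g : G, ∃! x, x ∈ T₁ ∧ x⁻¹ * g ∈ H₁) (g : G) :
    trMap (p := p) H H₁ (bmap H₁ T₁ g) = piMap (p := p) H H₁ hle (bmap H T g) := by
  classical
  set n := H.relIndex H₁ with hn
  have tr_zero : trMap (p := p) H H₁ 0 = 0 := Finsupp.sum_zero_index
  have tr_single : ∀ (k : Abelianization ↥H₁) (c : ℤ_[p]),
      trMap (p := p) H H₁ (MonoidAlgebra.single k c) =
        if hk : k ∈ Smap H H₁ then
          MonoidAlgebra.single (⟨k, hk⟩ : ↥(Smap H H₁)) ((n : ℤ_[p]) * c) else 0 := by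
    intro k c
    refine Finsupp.sum_single_index ?_
    split_ifs <;> simp
  have tr_add : ∀ a b : MonoidAlgebra ℤ_[p] (Abelianization ↥H₁),
      trMap (p := p) H H₁ (a + b) = trMap (p := p) H H₁ a + trMap (p := p) H H₁ b := by
    intro a b
    refine Finsupp.sum_add_index' ?_ ?_
    · intro k; split_ifs <;> simp
    · intro k c c'; split_ifs <;> simp [mul_add, MonoidAlgebra.single_add]
  have tr_sum : ∀ (s : Finset G) (f : G → MonoidAlgebra ℤ_[p] (Abelianization ↥H₁)),
      trMap (p := p) H H₁ (∑ x ∈ s, f x) = ∑ x ∈ s, trMap (p := p) H H₁ (f x) :=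
    fun s f => map_sum (AddMonoidHom.mk' (trMap (p := p) H H₁) tr_add) f s
  -- the `T₁`-indexing function
  have hφe := fun x : G => (hT₁ x).exists
  set φ : G → G := fun x => (hφe x).choose with hφdef
  have hφ1 : ∀ x, φ x ∈ T₁ ∧ (φ x)⁻¹ * x ∈ H₁ := fun x => (hφe x).choose_spec
  have hφu : ∀ x y, y ∈ T₁ → y⁻¹ * x ∈ H₁ → φ x = y := fun x y hy hyx =>
    (hT₁ x).unique (hφ1 x) ⟨hy, hyx⟩
  have md_sum : ∀ (s : Finset G) (f : G → MonoidAlgebra ℤ_[p] (Abelianization ↥H)),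
      MonoidAlgebra.mapDomain (Abelianization.lift (toS H H₁ hle)) (∑ x ∈ s, f x) =
        ∑ x ∈ s, MonoidAlgebra.mapDomain (Abelianization.lift (toS H H₁ hle)) (f x) :=
    fun s f => map_sum (AddMonoidHom.mk' (MonoidAlgebra.mapDomain (R := ℤ_[p])
      (Abelianization.lift (toS H H₁ hle))) (MonoidAlgebra.mapDomain_add _)) f s
  rw [bmap, bmap, tr_sum, piMap, md_sum]
  conv_rhs => rw [← Finset.sum_fiberwise_of_maps_to (g := φ) (t := T₁) (fun x _ => (hφ1 x).1)]
  refine Finset.sum_congr rfl ?_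
  intro x₁ hx₁
  have hfil : (T.filter fun x => φ x = x₁) = T.filter (fun x => x₁⁻¹ * x ∈ H₁) := by
    refine Finset.filter_congr ?_
    intro x _
    constructor
    · rintro rfl; exact (hφ1 x).2
    · intro h; exact hφu x x₁ hx₁ h
  rw [hfil]
  by_cases ha : x₁⁻¹ * g * x₁ ∈ H
  · have ha1 : x₁⁻¹ * g * x₁ ∈ H₁ := hle ha
    have hk : Abelianization.of (⟨x₁⁻¹ * g * x₁, ha1⟩ : ↥H₁) ∈ Smap H H₁ :=
      ⟨⟨x₁⁻¹ * g * x₁, ha1⟩, Subgroup.mem_subgroupOf.mpr ha, rfl⟩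
    rw [dif_pos ha1, tr_single, dif_pos hk]
    have step : ∀ x ∈ T.filter (fun x => x₁⁻¹ * x ∈ H₁),
        (MonoidAlgebra.mapDomain (Abelianization.lift (toS H H₁ hle))
          (if h : x⁻¹ * g * x ∈ H then
            MonoidAlgebra.single (Abelianization.of (⟨x⁻¹ * g * x, h⟩ : ↥H)) (1 : ℤ_[p]) else 0))
        = MonoidAlgebra.single
            (⟨Abelianization.of (⟨x₁⁻¹ * g * x₁, ha1⟩ : ↥H₁), hk⟩ : ↥(Smap H H₁)) (1 : ℤ_[p]) := by
      intro x hx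
      have ht : x₁⁻¹ * x ∈ H₁ := (Finset.mem_filter.mp hx).2
      have hxa : x⁻¹ * g * x = (x₁⁻¹ * x)⁻¹ * (x₁⁻¹ * g * x₁) * (x₁⁻¹ * x) := by group
      have hxH : x⁻¹ * g * x ∈ H := by
        open scoped commutatorElement in
        have e2 : x⁻¹ * g * x = (x₁⁻¹ * g * x₁) * ⁅(x₁⁻¹ * g * x₁)⁻¹, (x₁⁻¹ * x)⁻¹⁆ := by
          rw [commutatorElement_def]; group
        rw [e2]
        exact mul_mem ha
          (hcomm (Subgroup.commutator_mem_commutator (inv_mem ha1) (inv_mem ht)))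
      rw [dif_pos hxH, MonoidAlgebra.mapDomain_single]
      congr 1
      have : Abelianization.lift (toS H H₁ hle) (Abelianization.of (⟨x⁻¹ * g * x, hxH⟩ : ↥H))
          = toS H H₁ hle ⟨x⁻¹ * g * x, hxH⟩ := Abelianization.lift_apply_of _ _
      rw [this]
      apply Subtype.ext
      show Abelianization.of (Subgroup.inclusion hle ⟨x⁻¹ * g * x, hxH⟩)
          = Abelianization.of (⟨x₁⁻¹ * g * x₁, ha1⟩ : ↥H₁)
      have hsub : (Subgroup.inclusion hle ⟨x⁻¹ * g * x, hxH⟩ : ↥H₁)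
          = (⟨x₁⁻¹ * x, ht⟩ : ↥H₁)⁻¹ * ⟨x₁⁻¹ * g * x₁, ha1⟩ * ⟨x₁⁻¹ * x, ht⟩ := by
        apply Subtype.ext
        push_cast
        simpa [Subgroup.coe_inclusion] using hxa
      rw [hsub, of_conj_eq]
    rw [Finset.sum_congr rfl step, Finset.sum_const, fiber_card H H₁ hle T hT x₁, ← hn]
    simp
  · have hzero : ∀ x ∈ T.filter (fun x => x₁⁻¹ * x ∈ H₁),
        (MonoidAlgebra.mapDomain (Abelianization.lift (toS H H₁ hle))
          (if h : x⁻¹ * g * x ∈ H then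
            MonoidAlgebra.single (Abelianization.of (⟨x⁻¹ * g * x, h⟩ : ↥H)) (1 : ℤ_[p]) else 0))
        = 0 := by
      intro x hx
      have ht : x₁⁻¹ * x ∈ H₁ := (Finset.mem_filter.mp hx).2
      have hnot : x⁻¹ * g * x ∉ H := by
        intro hmem
        apply ha
        have hb1 : x⁻¹ * g * x ∈ H₁ := hle hmem
        open scoped commutatorElement in
        have e2 : x₁⁻¹ * g * x₁ = (x⁻¹ * g * x) * ⁅(x⁻¹ * g * x)⁻¹, x₁⁻¹ * x⁆ := by
          rw [commutatorElement_def]; group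
        rw [e2]
        exact mul_mem hmem
          (hcomm (Subgroup.commutator_mem_commutator (inv_mem hb1) ht))
      rw [dif_neg hnot, MonoidAlgebra.mapDomain_zero]
    rw [Finset.sum_eq_zero hzero]
    by_cases ha1 : x₁⁻¹ * g * x₁ ∈ H₁
    · rw [dif_pos ha1, tr_single, dif_neg]
      intro hk
      obtain ⟨b, hb, hbe⟩ := hk
      have hcm := (of_eq_iff H₁ b ⟨x₁⁻¹ * g * x₁, ha1⟩).mp hbe
      have hc : ((b⁻¹ * ⟨x₁⁻¹ * g * x₁, ha1⟩ : ↥H₁) : G) ∈ H :=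
        hcomm (coe_mem_commutator H₁ _ hcm)
      apply ha
      have hbH : (b : G) ∈ H := Subgroup.mem_subgroupOf.mp hb
      have he : x₁⁻¹ * g * x₁ = (b : G) * ((b⁻¹ * ⟨x₁⁻¹ * g * x₁, ha1⟩ : ↥H₁) : G) := by
        push_cast; group
      rw [he]
      exact mul_mem hbH hc
    · rw [dif_neg ha1, tr_zero]
end

section
/- Let G be a finite group, g ∈ G, and let P_g be the cyclic subgroup generated by g. For H a cyclic subgroup of G, define v_H on the tuple (β^G_P([g]))_{P cyclic} by v_H((a_P)) = Σ_{P cyclic, P^p ≤ H} ([P:P^p]/[H:P^p]) · ver_{P,P^p}(η_P(a_P)) ∈ Z_p[H], where ver is the p-power map P → P^p ⊆ H and η_P kills non-generators of P. Then v_H(β^G_C([g])) = β^G_{C,H}([g^p]); i.e., the diagram intertwining β^G_C with the map φ: [g] ↦ [g^p] on Z_p[Conj(G)] commutes. -/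
/- STATEMENT 10: `G` a finite `p`-group, `H` a cyclic subgroup, `g ∈ G`.  With
`v_H((a_P)) = Σ_{P cyclic, P^p ≤ H} ([P:P^p]/[H:P^p]) · ver_{P,P^p}(η_P(a_P))`,
one has `v_H(β^G_C([g])) = β^G_{C,H}([g^p])`: the diagram intertwining `β^G_C`
with `φ : [g] ↦ [g^p]` commutes. -/

open scoped Classical

/-- `β^G_{C,H}([g]) ∈ ℚ_p[H]` computed with the transversal `T`. -/
noncomputable def bmapCycQ {p : ℕ} [Fact p.Prime] {G : Type*} [Group G]
    (H : Subgroup G) (T : Finset G) (g : G) : MonoidAlgebra ℚ_[p] ↥H :=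
  ∑ x ∈ T, if h : x⁻¹ * g * x ∈ H then
    MonoidAlgebra.single (⟨x⁻¹ * g * x, h⟩ : ↥H) (1 : ℚ_[p]) else 0

/-- `η_P` : kills the non-generators of `P`, fixes the generators. -/
noncomputable def etaMap {p : ℕ} [Fact p.Prime] {G : Type*} [Group G] (P : Subgroup G)
    (x : MonoidAlgebra ℚ_[p] ↥P) : MonoidAlgebra ℚ_[p] ↥P :=
  x.coeff.sum fun h c => if Subgroup.zpowers (h : G) = P then MonoidAlgebra.single h c else 0

/-- `P^p`, the subgroup generated by the `p`-th powers of elements of `P`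
(equal to `{x^p : x ∈ P}` for `P` cyclic). -/
def Pp {G : Type*} [Group G] (p : ℕ) (P : Subgroup G) : Subgroup G :=
  Subgroup.closure ((fun x => x ^ p) '' (P : Set G))

/-- `ver_{P,P^p} : ℚ_p[P] → ℚ_p[H]`, induced by `y ↦ y^p` (assuming `y^p ∈ H` for
all `y ∈ P`). -/
noncomputable def verMap {p : ℕ} [Fact p.Prime] {G : Type*} [Group G] (P H : Subgroup G)
    (hc : ∀ y ∈ P, y ^ p ∈ H) (x : MonoidAlgebra ℚ_[p] ↥P) : MonoidAlgebra ℚ_[p] ↥H :=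
  MonoidAlgebra.ofCoeff (Finsupp.mapDomain (fun y : ↥P => (⟨y.1 ^ p, hc y.1 y.2⟩ : ↥H)) x.coeff)

section Aux

variable {G : Type*} [Group G]

private lemma conj_pow'' (x g : G) (n : ℕ) : (x⁻¹ * g * x) ^ n = x⁻¹ * g ^ n * x := by
  have h : x⁻¹ * g * x = x⁻¹ * g * (x⁻¹)⁻¹ := by rw [inv_inv]
  rw [h, conj_pow, inv_inv]

private lemma conj_zpow'' (x g : G) (n : ℤ) : (x⁻¹ * g * x) ^ n = x⁻¹ * g ^ n * x := by
  have h : x⁻¹ * g * x = x⁻¹ * g * (x⁻¹)⁻¹ := by rw [inv_inv]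
  rw [h, conj_zpow, inv_inv]

private lemma conj_eq_self_of_mem {y k : G} (hk : k ∈ Subgroup.zpowers y) :
    k⁻¹ * y * k = y := by
  obtain ⟨n, rfl⟩ := Subgroup.mem_zpowers_iff.1 hk
  have h : y * y ^ n = y ^ n * y := ((Commute.refl y).zpow_right n).eq
  rw [mul_assoc, h, inv_mul_cancel_left]

private lemma conj_eq_self_of_mem' {y k : G} (hk : k ∈ Subgroup.zpowers (k⁻¹ * y * k)) :
    k⁻¹ * y * k = y := by
  have h := conj_eq_self_of_mem hk
  have h2 := congrArg (fun z => k * z * k⁻¹) h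
  simp only [mul_assoc, mul_inv_cancel_left, inv_mul_cancel_left, mul_inv_cancel,
    inv_mul_cancel, mul_one] at h2
  -- h2 should now read : k⁻¹ * y * k = y (up to associativity)
  group at h2 ⊢
  exact h2

private lemma transversal_sum [Fintype G] (K : Subgroup G) (T : Finset G)
    (hT : ∀ g : G, ∃! x, x ∈ T ∧ x⁻¹ * g ∈ K)
    {M : Type*} [AddCommMonoid M] (f : G → M)
    (hf : ∀ (x k : G), k ∈ K → f (x * k) = f x) :
    ∑ x : G, f x = Nat.card ↥K • ∑ t ∈ T, f t := by
  classical
  have hcard : ∀ t : G, (Finset.univ.filter fun x => t⁻¹ * x ∈ K).card = Nat.card ↥K := by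
    intro t
    rw [Nat.card_eq_fintype_card, ← Fintype.card_subtype]
    exact Fintype.card_congr
      ⟨fun x => ⟨t⁻¹ * x.1, x.2⟩, fun k => ⟨t * k.1, by simp [inv_mul_cancel_left]⟩,
        fun x => by simp, fun k => by simp⟩
  calc ∑ x : G, f x
      = ∑ x : G, ∑ t ∈ T, if t⁻¹ * x ∈ K then f x else 0 := by
        refine Finset.sum_congr rfl fun x _ => ?_
        obtain ⟨t0, ⟨h1, h2⟩, hu⟩ := hT x
        rw [Finset.sum_eq_single_of_mem t0 h1
          (fun t ht hne => if_neg fun hK => hne (hu t ⟨ht, hK⟩)), if_pos h2]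
    _ = ∑ t ∈ T, ∑ x : G, if t⁻¹ * x ∈ K then f x else 0 := Finset.sum_comm
    _ = ∑ t ∈ T, Nat.card ↥K • f t := by
        refine Finset.sum_congr rfl fun t _ => ?_
        have h : ∀ x : G, (if t⁻¹ * x ∈ K then f x else 0) = if t⁻¹ * x ∈ K then f t else 0 := by
          intro x
          by_cases hx : t⁻¹ * x ∈ K
          · rw [if_pos hx, if_pos hx]
            have h2 := hf t (t⁻¹ * x) hx
            rwa [mul_inv_cancel_left] at h2
          · rw [if_neg hx, if_neg hx]
        simp_rw [h]
        rw [← Finset.sum_filter, Finset.sum_const, hcard t]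
    _ = Nat.card ↥K • ∑ t ∈ T, f t := (Finset.smul_sum).symm

private lemma card_mul_relIndex' {K L : Subgroup G} (h : K ≤ L) :
    Nat.card ↥K * K.relIndex L = Nat.card ↥L := by
  have h2 := Subgroup.card_mul_index (G := ↥L) (K.subgroupOf L)
  rwa [Nat.card_congr (Subgroup.subgroupOfEquivOfLe h).toEquiv] at h2

private lemma etaMap_zero {p : ℕ} [Fact p.Prime] (P : Subgroup G) :
    etaMap (p := p) P 0 = 0 := by
  unfold etaMap; rw [MonoidAlgebra.coeff_zero]; exact Finsupp.sum_zero_index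

private lemma etaMap_add {p : ℕ} [Fact p.Prime] (P : Subgroup G)
    (a b : MonoidAlgebra ℚ_[p] ↥P) :
    etaMap (p := p) P (a + b) = etaMap (p := p) P a + etaMap (p := p) P b := by
  unfold etaMap
  rw [MonoidAlgebra.coeff_add]
  refine Finsupp.sum_add_index' (fun h => ?_) (fun h c1 c2 => ?_)
  · split_ifs <;> simp
  · split_ifs <;> simp [MonoidAlgebra.single_add]

private lemma etaMap_single {p : ℕ} [Fact p.Prime] (P : Subgroup G) (a : ↥P) (c : ℚ_[p]) :
    etaMap (p := p) P (MonoidAlgebra.single a c) =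
      if Subgroup.zpowers (a : G) = P then MonoidAlgebra.single a c else 0 := by
  unfold etaMap
  rw [MonoidAlgebra.coeff_single]
  refine Finsupp.sum_single_index ?_
  split_ifs <;> simp

end Aux

theorem stmt10 (p : ℕ) [Fact p.Prime] (G : Type*) [Group G] [Fintype G]
    (hG : IsPGroup p G)
    (Tr : Subgroup G → Finset G)
    (hTr : ∀ H : Subgroup G, ∀ g : G, ∃! x, x ∈ Tr H ∧ x⁻¹ * g ∈ H)
    (H : Subgroup G) (hHcyc : IsCyclic ↥H) (g : G) :
    (∑ P ∈ Finset.univ.filter (fun P : Subgroup G => IsCyclic ↥P),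
      if hc : ∀ y ∈ P, y ^ p ∈ H then
        (((Pp p P).relIndex P : ℚ_[p]) / ((Pp p P).relIndex H : ℚ_[p]))
          • verMap (p := p) P H hc (etaMap (p := p) P (bmapCycQ P (Tr P) g))
      else 0)
    = bmapCycQ (p := p) H (Tr H) (g ^ p) := by
  classical
  -- commutativity inside H
  have hHcomm : ∀ a b : G, a ∈ H → b ∈ H → a * b = b * a := by
    intro a b ha hb
    obtain ⟨σ, hσ⟩ := hHcyc
    obtain ⟨m, hm⟩ := Subgroup.mem_zpowers_iff.1 (hσ ⟨a, ha⟩)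
    obtain ⟨n, hn⟩ := Subgroup.mem_zpowers_iff.1 (hσ ⟨b, hb⟩)
    have h : (⟨a, ha⟩ : ↥H) * ⟨b, hb⟩ = ⟨b, hb⟩ * ⟨a, ha⟩ := by
      rw [← hm, ← hn, ← zpow_add, ← zpow_add, add_comm]
    simpa using congrArg Subtype.val h
  refine MonoidAlgebra.ext (Finsupp.ext fun h => ?_)
  set ind : G → ℚ_[p] := fun x => if x⁻¹ * g ^ p * x = (h : G) then 1 else 0 with hind
  set indP : Subgroup G → G → ℚ_[p] := fun P x =>
    if Subgroup.zpowers (x⁻¹ * g * x) = P ∧ x⁻¹ * g ^ p * x = (h : G) then 1 else 0 with hindP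
  have cardH_ne : (Nat.card ↥H : ℚ_[p]) ≠ 0 := Nat.cast_ne_zero.2 Nat.card_pos.ne'
  -- right hand side coefficient
  have hR : (bmapCycQ (p := p) H (Tr H) (g ^ p)).coeff h = ∑ t ∈ Tr H, ind t := by
    unfold bmapCycQ
    rw [MonoidAlgebra.coeff_sum, Finset.sum_apply']
    refine Finset.sum_congr rfl fun t _ => ?_
    by_cases ht : t⁻¹ * g ^ p * t ∈ H
    · rw [dif_pos ht, MonoidAlgebra.coeff_single, Finsupp.single_apply]
      simp only [hind]
      simp only [Subtype.ext_iff]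
    · rw [dif_neg ht, MonoidAlgebra.coeff_zero, Finsupp.zero_apply]
      simp only [hind]
      rw [if_neg]
      intro e
      exact ht (e ▸ h.2)
  have hinvH : ∀ (x k : G), k ∈ H → ind (x * k) = ind x := by
    intro x k hk
    have hc1 : (x * k)⁻¹ * g ^ p * (x * k) = k⁻¹ * (x⁻¹ * g ^ p * x) * k := by group
    simp only [hind, hc1]
    by_cases hx : x⁻¹ * g ^ p * x = (h : G)
    · rw [if_pos hx, if_pos]
      rw [hx, mul_assoc, hHcomm _ _ h.2 hk, ← mul_assoc, inv_mul_cancel, one_mul]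
    · rw [if_neg hx, if_neg]
      intro e
      apply hx
      have : x⁻¹ * g ^ p * x = k * (h : G) * k⁻¹ := by rw [← e]; group
      rw [this, hHcomm _ _ hk h.2, mul_assoc, mul_inv_cancel, mul_one]
  -- per-subgroup coefficient computation
  have hC : ∀ (P : Subgroup G) (hc : ∀ y ∈ P, y ^ p ∈ H),
      (verMap (p := p) P H hc (etaMap (p := p) P (bmapCycQ P (Tr P) g))).coeff h
        = ∑ x ∈ Tr P, indP P x := by
    intro P hc
    have hEV : verMap (p := p) P H hc (etaMap (p := p) P (bmapCycQ P (Tr P) g))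
        = ∑ x ∈ Tr P, verMap (p := p) P H hc (etaMap (p := p) P
            (if hxP : x⁻¹ * g * x ∈ P then
              MonoidAlgebra.single (⟨x⁻¹ * g * x, hxP⟩ : ↥P) (1 : ℚ_[p]) else 0)) := by
      unfold bmapCycQ
      induction (Tr P) using Finset.cons_induction with
      | empty => simp [etaMap_zero, verMap, Finsupp.mapDomain_zero]
      | cons a s ha ih =>
        rw [Finset.sum_cons, Finset.sum_cons, etaMap_add, ← ih]
        unfold verMap
        rw [MonoidAlgebra.coeff_add, Finsupp.mapDomain_add, MonoidAlgebra.ofCoeff_add]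
    rw [hEV, MonoidAlgebra.coeff_sum, Finset.sum_apply']
    refine Finset.sum_congr rfl fun x _ => ?_
    by_cases hxP : x⁻¹ * g * x ∈ P
    · rw [dif_pos hxP, etaMap_single]
      by_cases hz : Subgroup.zpowers (x⁻¹ * g * x) = P
      · rw [if_pos hz]
        unfold verMap
        rw [MonoidAlgebra.coeff_ofCoeff, MonoidAlgebra.coeff_single, Finsupp.mapDomain_single,
          Finsupp.single_apply]
        have he : ((⟨(x⁻¹ * g * x) ^ p, hc _ hxP⟩ : ↥H) = h) ↔ (x⁻¹ * g ^ p * x = (h : G)) := by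
          rw [Subtype.ext_iff]
          simp only [conj_pow'']
        rw [if_congr he rfl rfl]
        simp only [hindP]
        simp only [if_congr (and_iff_right hz) rfl rfl]
      · rw [if_neg hz]
        unfold verMap
        rw [MonoidAlgebra.coeff_ofCoeff, MonoidAlgebra.coeff_zero, Finsupp.mapDomain_zero,
          Finsupp.zero_apply]
        simp only [hindP]
        rw [if_neg]
        intro e
        exact hz e.1
    · rw [dif_neg hxP, etaMap_zero]
      unfold verMap
      rw [MonoidAlgebra.coeff_ofCoeff, MonoidAlgebra.coeff_zero, Finsupp.mapDomain_zero,
        Finsupp.zero_apply]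
      simp only [hindP]
      rw [if_neg]
      intro e
      exact hxP (e.1 ▸ Subgroup.mem_zpowers _)
  -- invariance of indP
  have hinvP : ∀ (P : Subgroup G) (x k : G), k ∈ P → indP P (x * k) = indP P x := by
    intro P x k hk
    have hc1 : (x * k)⁻¹ * g * (x * k) = k⁻¹ * (x⁻¹ * g * x) * k := by group
    have hc2 : (x * k)⁻¹ * g ^ p * (x * k) = k⁻¹ * (x⁻¹ * g ^ p * x) * k := by group
    simp only [hindP, hc1, hc2]
    by_cases hz : Subgroup.zpowers (x⁻¹ * g * x) = P
    · have hky : k⁻¹ * (x⁻¹ * g * x) * k = x⁻¹ * g * x :=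
        conj_eq_self_of_mem (by rw [hz]; exact hk)
      have hkyp : k⁻¹ * (x⁻¹ * g ^ p * x) * k = x⁻¹ * g ^ p * x := by
        have h1 := conj_pow'' k (x⁻¹ * g * x) p
        rw [hky] at h1
        rw [← conj_pow'' x g p, ← h1]
      rw [hky, hkyp]
    · rw [if_neg, if_neg]
      · intro e; exact hz e.1
      · rintro ⟨e1, -⟩
        apply hz
        rw [← conj_eq_self_of_mem' (y := x⁻¹ * g * x) (k := k) (by rw [e1]; exact hk)]
        exact e1
  -- left hand side
  rw [MonoidAlgebra.coeff_sum, Finset.sum_apply']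
  have hstep : ∀ P ∈ Finset.univ.filter (fun P : Subgroup G => IsCyclic ↥P),
      ((if hc : ∀ y ∈ P, y ^ p ∈ H then
        (((Pp p P).relIndex P : ℚ_[p]) / ((Pp p P).relIndex H : ℚ_[p]))
          • verMap (p := p) P H hc (etaMap (p := p) P (bmapCycQ P (Tr P) g))
      else 0).coeff h)
      = ∑ x : G, (if hc : ∀ y ∈ P, y ^ p ∈ H then
          (((Pp p P).relIndex P : ℚ_[p]) / ((Pp p P).relIndex H : ℚ_[p]))
            * ((Nat.card ↥P : ℚ_[p])⁻¹ * indP P x)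
        else 0) := by
    intro P _
    by_cases hc : ∀ y ∈ P, y ^ p ∈ H
    · rw [dif_pos hc]
      simp only [dif_pos hc]
      rw [MonoidAlgebra.coeff_smul, Finsupp.smul_apply, smul_eq_mul, hC P hc]
      have htv := transversal_sum P (Tr P) (hTr P) (indP P) (hinvP P)
      have cardP_ne : (Nat.card ↥P : ℚ_[p]) ≠ 0 := Nat.cast_ne_zero.2 Nat.card_pos.ne'
      have hsum : ∑ x ∈ Tr P, indP P x = (Nat.card ↥P : ℚ_[p])⁻¹ * ∑ x : G, indP P x := by
        rw [htv, nsmul_eq_mul, ← mul_assoc, inv_mul_cancel₀ cardP_ne, one_mul]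
      rw [hsum, Finset.mul_sum, Finset.mul_sum]
    · rw [dif_neg hc]
      simp only [dif_neg hc, MonoidAlgebra.coeff_zero, Finsupp.zero_apply]
      exact (Finset.sum_const_zero).symm
  rw [Finset.sum_congr rfl hstep, Finset.sum_comm]
  -- inner sum over P for each x
  have hinner : ∀ x : G,
      (∑ P ∈ Finset.univ.filter (fun P : Subgroup G => IsCyclic ↥P),
        (if hc : ∀ y ∈ P, y ^ p ∈ H then
          (((Pp p P).relIndex P : ℚ_[p]) / ((Pp p P).relIndex H : ℚ_[p]))
            * ((Nat.card ↥P : ℚ_[p])⁻¹ * indP P x)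
        else 0))
      = (Nat.card ↥H : ℚ_[p])⁻¹ * ind x := by
    intro x
    by_cases hx : x⁻¹ * g ^ p * x = (h : G)
    · set P0 : Subgroup G := Subgroup.zpowers (x⁻¹ * g * x) with hP0
      have hcyc : IsCyclic ↥P0 := by
        refine ⟨⟨⟨x⁻¹ * g * x, Subgroup.mem_zpowers _⟩, fun b => ?_⟩⟩
        obtain ⟨n, hn⟩ := Subgroup.mem_zpowers_iff.1 b.2
        exact Subgroup.mem_zpowers_iff.2 ⟨n, Subtype.ext (by rw [← hn]; simp)⟩
      have hmem : P0 ∈ Finset.univ.filter (fun P : Subgroup G => IsCyclic ↥P) :=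
        Finset.mem_filter.2 ⟨Finset.mem_univ _, hcyc⟩
      have hc0 : ∀ y ∈ P0, y ^ p ∈ H := by
        intro y hy
        obtain ⟨n, hn⟩ := Subgroup.mem_zpowers_iff.1 hy
        rw [← hn, ← zpow_natCast, ← zpow_mul, mul_comm, zpow_mul, zpow_natCast,
          conj_pow'', hx]
        exact H.zpow_mem h.2 n
      rw [Finset.sum_eq_single_of_mem P0 hmem]
      · rw [dif_pos hc0]
        have hiP : indP P0 x = 1 := by
          simp only [hindP]
          rw [if_pos]
          exact ⟨rfl, hx⟩
        have hix : ind x = 1 := by simp only [hind]; exact if_pos hx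
        rw [hiP, hix]
        -- numeric identity
        have hKP : Pp p P0 ≤ P0 := (Subgroup.closure_le _).2 (by
          rintro _ ⟨y, hy, rfl⟩; exact P0.pow_mem hy p)
        have hKH : Pp p P0 ≤ H := (Subgroup.closure_le _).2 (by
          rintro _ ⟨y, hy, rfl⟩; exact hc0 y hy)
        have e1 := card_mul_relIndex' hKP
        have e2 := card_mul_relIndex' hKH
        have keyNat : (Pp p P0).relIndex P0 * Nat.card ↥H
            = (Pp p P0).relIndex H * Nat.card ↥P0 := by
          rw [← e1, ← e2]; ring
        have cardP_ne : (Nat.card ↥P0 : ℚ_[p]) ≠ 0 := Nat.cast_ne_zero.2 Nat.card_pos.ne'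
        have rH_ne : ((Pp p P0).relIndex H : ℚ_[p]) ≠ 0 := by
          refine Nat.cast_ne_zero.2 fun h0 => ?_
          rw [h0, mul_zero] at e2
          exact Nat.card_pos.ne' e2.symm
        have keyNat' : (Pp p P0).relIndex P0 * Fintype.card ↥H
            = (Pp p P0).relIndex H * Fintype.card ↥P0 := by
          simpa [Nat.card_eq_fintype_card] using keyNat
        field_simp
        exact_mod_cast keyNat
      · intro P hP hne
        by_cases hc : ∀ y ∈ P, y ^ p ∈ H
        · rw [dif_pos hc]
          have h0 : indP P x = 0 := by
            simp only [hindP]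
            rw [if_neg]
            rintro ⟨e1, -⟩
            exact hne (e1.symm.trans hP0.symm)
          rw [h0, mul_zero, mul_zero]
        · rw [dif_neg hc]
    · have hix : ind x = 0 := by simp only [hind]; exact if_neg hx
      rw [hix, mul_zero]
      refine Finset.sum_eq_zero fun P _ => ?_
      by_cases hc : ∀ y ∈ P, y ^ p ∈ H
      · rw [dif_pos hc]
        have h0 : indP P x = 0 := by
          simp only [hindP]
          rw [if_neg]
          rintro ⟨-, e2⟩
          exact hx e2
        rw [h0, mul_zero, mul_zero]
      · rw [dif_neg hc]
  rw [Finset.sum_congr rfl fun x _ => hinner x, hR]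
  have htvH := transversal_sum H (Tr H) (hTr H) ind hinvH
  rw [← Finset.mul_sum, htvH, nsmul_eq_mul, ← mul_assoc, inv_mul_cancel₀ cardH_ne, one_mul]
end

section
/- Let G be a finite group and H a cyclic subgroup. If (a_P)_{P ∈ C} ∈ Π_{P cyclic} Z_p[P] satisfies condition A1 (compatibility under β^{H'}_H for nested cyclic subgroups) and for every cyclic P the coefficients of all generators of P in a_P vanish, then a_P = 0 for all P. Concretely: if H ≤ H' are cyclic subgroups and a_{H'} = Σ_{h ∈ H'} c_h·h, then β^{H'}_H(a_{H'}) = [H':H]·Σ_{h ∈ H} c_h·h, and induction on the subgroup lattice of a cyclic group forces all coefficients to vanish. -/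
/- STATEMENT 17: `G` finite.  If a tuple `(a_P)` over cyclic subgroups satisfies A1
(`β^{H'}_H(a_{H'}) = a_H` for nested cyclic `H ≤ H'`, where `β^{H'}_H` sends
`h ∈ H'` to `[H':H]·h` if `h ∈ H` and to `0` otherwise), and the coefficients of
all generators of `P` in `a_P` vanish for every cyclic `P`, then `a_P = 0` for
all cyclic `P`. -/

open scoped Classical

/-- `β^{H'}_H : ℤ_p[H'] → ℤ_p[H]` for nested (cyclic) subgroups:
`h ↦ [H':H]·h` if `h ∈ H`, else `0`. -/
noncomputable def betaRes {p : ℕ} [Fact p.Prime] {G : Type*} [Group G]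
    (H H' : Subgroup G) (x : MonoidAlgebra ℤ_[p] ↥H') : MonoidAlgebra ℤ_[p] ↥H :=
  x.coeff.sum fun h c =>
    if hh : (h : G) ∈ H then
      MonoidAlgebra.single (⟨(h : G), hh⟩ : ↥H) ((H.relIndex H' : ℤ_[p]) * c)
    else 0

lemma betaRes_apply {p : ℕ} [Fact p.Prime] {G : Type*} [Group G]
    (H H' : Subgroup G) (x : MonoidAlgebra ℤ_[p] ↥H') (g : G)
    (hgH : g ∈ H) (hgH' : g ∈ H') :
    (betaRes H H' x).coeff ⟨g, hgH⟩ = (H.relIndex H' : ℤ_[p]) * x.coeff ⟨g, hgH'⟩ := by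
  rw [betaRes, Finsupp.sum, MonoidAlgebra.coeff_sum, Finsupp.finset_sum_apply]
  rw [Finset.sum_eq_single (⟨g, hgH'⟩ : ↥H')]
  · simp [hgH]
  · intro b _ hb
    by_cases hbH : (b : G) ∈ H
    · rw [dif_pos hbH, MonoidAlgebra.coeff_single, Finsupp.single_apply, if_neg, ]
      intro heq
      apply hb
      exact Subtype.ext (by simpa using congrArg Subtype.val heq)
    · rw [dif_neg hbH]; rfl
  · intro hns
    simp [Finsupp.notMem_support_iff.mp hns]

theorem stmt17 (p : ℕ) [Fact p.Prime] (G : Type*) [Group G] [Fintype G]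
    (a : ∀ P : Subgroup G, MonoidAlgebra ℤ_[p] ↥P)
    (hA1 : ∀ H H' : Subgroup G, IsCyclic ↥H' → H ≤ H' →
      betaRes (p := p) H H' (a H') = a H)
    (hgen : ∀ P : Subgroup G, IsCyclic ↥P → ∀ h : ↥P,
      Subgroup.zpowers (h : G) = P → (a P).coeff h = 0) :
    ∀ P : Subgroup G, IsCyclic ↥P → a P = 0 := by
  suffices key : ∀ n, ∀ P : Subgroup G, IsCyclic ↥P → Nat.card ↥P = n → a P = 0 by
    intro P hP; exact key _ P hP rfl
  intro n
  induction n using Nat.strong_induction_on with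
  | _ n ih =>
  intro P hP hn
  subst hn
  ext h
  rw [MonoidAlgebra.coeff_zero, Finsupp.zero_apply]
  by_cases hz : Subgroup.zpowers (h : G) = P
  · exact hgen P hP h hz
  · set H := Subgroup.zpowers (h : G) with hH
    have hle : H ≤ P := Subgroup.zpowers_le.mpr h.2
    have hlt : H < P := lt_of_le_of_ne hle hz
    have hcard : Nat.card ↥H < Nat.card ↥P := by
      simp only [← SetLike.coe_sort_coe, Nat.card_coe_set_eq]
      exact Set.ncard_lt_ncard (by exact_mod_cast hlt) (Set.toFinite _)
    have hH0 : a H = 0 :=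
      ih (Nat.card ↥H) hcard H ⟨⟨⟨(h : G), Subgroup.mem_zpowers _⟩, fun x => by
        obtain ⟨n, hn⟩ := x.2
        exact ⟨n, Subtype.ext (by simpa using hn)⟩⟩⟩ rfl
    have key := congrArg (fun f => f.coeff (⟨(h : G), Subgroup.mem_zpowers _⟩ : ↥H))
      (hA1 H P hP hle)
    simp only [hH0, MonoidAlgebra.coeff_zero, Finsupp.zero_apply] at key
    rw [betaRes_apply H P (a P) (h : G) (Subgroup.mem_zpowers _) h.2] at key
    have hrel : (H.relIndex P : ℤ_[p]) ≠ 0 := by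
      have : H.relIndex P ≠ 0 := Subgroup.index_ne_zero_of_finite (H := H.subgroupOf P)
      exact_mod_cast this
    have := mul_eq_zero.mp key
    rcases this with h1 | h2
    · exact absurd h1 hrel
    · simpa using h2
end
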